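/- Let n ≥ 2, l ≤ 1, h:[0,l]→(0,∞) with t ↦ h(t)(1−t)^{1−n} nonincreasing, and let f:[0,l]→ℝ be absolutely continuous. Then ∫_0^l f(t)² h(t) dt ≤ (2/n) f(0)² h(0) + ((n+1)/(2n²)) ∫_0^l f'(t)² h(t) dt. -/

import Mathlib

open Set MeasureTheory

set_option maxHeartbeats 1000000

/-- the one-dimensional trace Poincaré inequality along a needle:
if `n ≥ 2`, `0 ≤ l ≤ 1`, `h : [0,l] → (0,∞)` with `t ↦ h(t)(1-t)^{1-n}` nonincreasing,
and `f` is absolutely continuous (with derivative `f'` in the sense of the fundamental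
theorem of calculus), then
`∫_0^l f² h ≤ (2/n) f(0)² h(0) + ((n+1)/(2n²)) ∫_0^l (f')² h`. -/
theorem stmt_8 (n : ℕ) (hn : 2 ≤ n) (l : ℝ) (hl0 : 0 ≤ l) (hl : l ≤ 1)
    (h f f' : ℝ → ℝ) (hpos : ∀ t ∈ Icc 0 l, 0 < h t)
    (hmono : AntitoneOn (fun t => h t / (1 - t) ^ (n - 1)) (Icc 0 l))
    (hFTC : ∀ t ∈ Icc 0 l, f t - f 0 = ∫ s in (0 : ℝ)..t, f' s)
    (hint1 : IntervalIntegrable (fun t => f t ^ 2 * h t) volume 0 l)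
    (hint2 : IntervalIntegrable (fun t => f' t ^ 2 * h t) volume 0 l) :
    (∫ t in (0 : ℝ)..l, f t ^ 2 * h t) ≤
      2 / n * (f 0 ^ 2 * h 0) +
        ((n : ℝ) + 1) / (2 * (n : ℝ) ^ 2) * ∫ t in (0 : ℝ)..l, f' t ^ 2 * h t := by
  have hn1 : 1 ≤ n := le_trans (by norm_num) hn
  have hnm : n - 1 + 1 = n := by omega
  set N : ℝ := (n : ℝ) with hN
  have hN2 : (2:ℝ) ≤ N := by rw [hN]; exact_mod_cast hn
  have hN0 : (0:ℝ) < N := by linarith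
  set K : ℝ := (N + 1) / (4 * N ^ 2) with hK
  have hK0 : 0 < K := by positivity
  -- measurability of h on (0, l]
  set μ : Measure ℝ := volume.restrict (Ioc 0 l) with hμ
  have h0mem : (0:ℝ) ∈ Icc 0 l := ⟨le_refl 0, hl0⟩
  have hh0 : 0 < h 0 := hpos 0 h0mem
  have hne1 : ∀ᵐ t : ℝ ∂volume, t ≠ (1:ℝ) := by
    rw [ae_iff]
    simpa using measure_singleton (1:ℝ)
  have haemem : ∀ᵐ t ∂μ, t ∈ Ioc 0 l ∧ t ≠ 1 :=
    (ae_restrict_mem measurableSet_Ioc).and (ae_restrict_of_ae hne1)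
  have hclamp : ∀ t : ℝ, max 0 (min t l) ∈ Icc 0 l :=
    fun t => ⟨le_max_left _ _, max_le hl0 (min_le_right _ _)⟩
  have hhm : AEMeasurable h μ := by
    set ψ : ℝ → ℝ := fun t => h (max 0 (min t l)) / (1 - max 0 (min t l)) ^ (n-1) with hψ
    have hψa : Antitone ψ := by
      intro a b hab
      exact hmono (hclamp a) (hclamp b) (max_le_max le_rfl (min_le_min_right l hab))
    have hψm : Measurable ψ := hψa.measurable
    have hHm : Measurable (fun t => ψ t * (1-t)^(n-1)) :=
      hψm.mul ((measurable_const.sub measurable_id).pow_const _)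
    refine hHm.aemeasurable.congr ?_
    filter_upwards [haemem] with t ht
    obtain ⟨ht, ht1⟩ := ht
    have htc : max 0 (min t l) = t := by rw [min_eq_left ht.2, max_eq_right ht.1.le]
    have h1t : (1-t) ^ (n-1) ≠ 0 := pow_ne_zero _ (sub_ne_zero.mpr (Ne.symm ht1))
    simp only [hψ, htc]
    field_simp
  -- pointwise bounds on h
  have hub : ∀ t ∈ Icc 0 l, t ≠ 1 → h t ≤ h 0 * (1-t)^(n-1) := by
    intro t ht ht1
    have ht1' : t < 1 := lt_of_le_of_ne (ht.2.trans hl) ht1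
    have hpt : (0:ℝ) < (1-t)^(n-1) := pow_pos (by linarith) _
    have := hmono h0mem ht ht.1
    simp only [sub_zero, one_pow, div_one] at this
    exact le_trans (by rw [div_le_iff₀ hpt] at this; linarith) le_rfl
  have hlb : ∀ s ∈ Icc 0 l, ∀ t ∈ Icc 0 l, s ≤ t → t ≠ 1 →
      h t * (1-s)^(n-1) ≤ h s * (1-t)^(n-1) := by
    intro s hs t ht hst ht1
    have ht1' : t < 1 := lt_of_le_of_ne (ht.2.trans hl) ht1
    have hs1' : s < 1 := lt_of_le_of_lt hst ht1'
    have hpt : (0:ℝ) < (1-t)^(n-1) := pow_pos (by linarith) _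
    have hps : (0:ℝ) < (1-s)^(n-1) := pow_pos (by linarith) _
    have := hmono hs ht hst
    rw [div_le_div_iff₀ hpt hps] at this
    linarith
  have hmono2 : ∀ s ∈ Icc 0 l, ∀ t ∈ Icc 0 l, s ≤ t → t ≠ 1 → h t ≤ h s := by
    intro s hs t ht hst ht1
    have ht1' : t < 1 := lt_of_le_of_ne (ht.2.trans hl) ht1
    have hs1' : s < 1 := lt_of_le_of_lt hst ht1'
    have hps : (0:ℝ) < (1-s)^(n-1) := pow_pos (by linarith) _
    have h1 := hlb s hs t ht hst ht1
    have h2 : (1-t)^(n-1) ≤ (1-s)^(n-1) := pow_le_pow_left₀ (by linarith) (by linarith) _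
    have h3 : 0 ≤ h s := (hpos s hs).le
    have := le_trans h1 (mul_le_mul_of_nonneg_left h2 h3)
    exact le_of_mul_le_mul_right this hps
  -- integrability of g := f'^2 * h and of f^2 * h
  set g : ℝ → ℝ := fun s => f' s ^ 2 * h s with hg
  have hgint : IntegrableOn g (Ioc 0 l) volume :=
    (intervalIntegrable_iff_integrableOn_Ioc_of_le hl0).1 hint2
  have hfint : IntegrableOn (fun t => f t ^ 2 * h t) (Ioc 0 l) volume :=
    (intervalIntegrable_iff_integrableOn_Ioc_of_le hl0).1 hint1
  have hf'sq : AEMeasurable (fun s => f' s ^ 2) μ := by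
    refine (hgint.aemeasurable.mul hhm.inv).congr ?_
    filter_upwards [haemem] with t ht
    have : h t ≠ 0 := (hpos t (Ioc_subset_Icc_self ht.1)).ne'
    simp only [Pi.mul_apply, Pi.inv_apply, hg]
    exact mul_inv_cancel_right₀ this _
  -- integrability of f'^2 on subintervals
  have hf'int : ∀ t ∈ Ioc 0 l, t ≠ 1 → IntegrableOn (fun s => f' s ^ 2) (Ioc 0 t) volume := by
    intro t ht ht1
    have htIcc : t ∈ Icc 0 l := Ioc_subset_Icc_self ht
    have hht : 0 < h t := hpos t htIcc
    refine Integrable.mono' ((hgint.mono_set (Ioc_subset_Ioc le_rfl ht.2)).const_mul (h t)⁻¹)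
      ((hf'sq.mono_measure (Measure.restrict_mono (Ioc_subset_Ioc le_rfl ht.2) le_rfl)).aestronglyMeasurable) ?_
    filter_upwards [ae_restrict_mem measurableSet_Ioc] with s hs
    have hsIcc : s ∈ Icc 0 l := ⟨hs.1.le, hs.2.trans ht.2⟩
    have hhs : 0 < h s := hpos s hsIcc
    have hts : h t ≤ h s := hmono2 s hsIcc t htIcc hs.2 ht1
    rw [Real.norm_of_nonneg (sq_nonneg _)]
    have e : f' s ^ 2 = g s * (h s)⁻¹ := by field_simp [hg]; rfl
    rw [e, hg]
    rw [mul_comm ((h t)⁻¹)]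
    have hgnn : 0 ≤ f' s ^ 2 * h s := mul_nonneg (sq_nonneg _) hhs.le
    exact mul_le_mul_of_nonneg_left (inv_anti₀ hht hts) hgnn
  -- antiderivative computations
  have hder1 : ∀ t : ℝ, HasDerivAt (fun t : ℝ => 1 - t) (-1) t :=
    fun t => (hasDerivAt_id t).const_sub 1
  have c1 : ∀ a b : ℝ, a ≤ b → ∫ t in a..b, (1-t)^(n-1) = (1-a)^n/N - (1-b)^n/N := by
    intro a b hab
    have hd : ∀ t : ℝ, HasDerivAt (fun t : ℝ => -((1-t)^n / N)) ((1-t)^(n-1)) t := by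
      intro t
      have h3 := (((hder1 t).pow n).div_const N).neg
      refine h3.congr_deriv ?_
      symm
      rw [← hN]
      field_simp
    rw [intervalIntegral.integral_eq_sub_of_hasDerivAt (fun t _ => hd t)
      (((continuous_const.sub continuous_id).pow _).intervalIntegrable _ _)]
    ring
  have c2 : ∀ a b : ℝ, a ≤ b →
      ∫ t in a..b, t * (1-t)^(n-1)
        = ((1-a)^n/N - (1-a)^(n+1)/(N+1)) - ((1-b)^n/N - (1-b)^(n+1)/(N+1)) := by
    intro a b hab
    have hd : ∀ t : ℝ, HasDerivAt (fun t : ℝ => -((1-t)^n / N) + (1-t)^(n+1)/(N+1))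
        (t * (1-t)^(n-1)) t := by
      intro t
      have h2 := (((hder1 t).pow n).div_const N).neg
      have h3 := ((hder1 t).pow (n+1)).div_const (N+1)
      have h4 := h2.add h3
      refine h4.congr_deriv ?_
      symm
      have e1 : (1-t)^n = (1-t)^(n-1) * (1-t) := by rw [← pow_succ, hnm]
      have e2 : n + 1 - 1 = n := rfl
      rw [e2, ← hN]
      push_cast
      rw [e1]
      have hN1 : N + 1 ≠ 0 := by positivity
      field_simp
      ring
    rw [intervalIntegral.integral_eq_sub_of_hasDerivAt (fun t _ => hd t)
      ((continuous_id.mul ((continuous_const.sub continuous_id).pow _)).intervalIntegrable _ _)]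
    ring
  -- the key kernel bound
  have hG : ∀ s ∈ Icc (0:ℝ) l,
      (∫⁻ t in Ioc s l, ENNReal.ofReal (2 * t * h t)) ≤ ENNReal.ofReal (2 * K * h s) := by
    intro s hs
    rcases eq_or_ne s 1 with rfl | hs1
    · have hl1 : l ≤ 1 := hl
      have : Ioc (1:ℝ) l = ∅ := Ioc_eq_empty (by intro hc; linarith)
      simp [this]
    have hs1' : s < 1 := lt_of_le_of_ne (hs.2.trans hl) hs1
    have hps : (0:ℝ) < (1-s)^(n-1) := pow_pos (by linarith) _
    have hhs : 0 < h s := hpos s hs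
    set c : ℝ := h s / (1-s)^(n-1) with hc
    have hc0 : 0 < c := div_pos hhs hps
    have hcb : ∀ t ∈ Ioc s l, t ≠ 1 → 2 * t * h t ≤ 2 * t * ((1-t)^(n-1) * c) := by
      intro t ht ht1
      have htIcc : t ∈ Icc 0 l := ⟨le_trans hs.1 ht.1.le, ht.2⟩
      have h1 := hlb s hs t htIcc ht.1.le ht1
      have h2 : h t ≤ (1-t)^(n-1) * c := by
        rw [hc, mul_div_assoc', mul_comm]
        rw [le_div_iff₀ hps]
        linarith
      have ht0 : (0:ℝ) ≤ 2 * t := by linarith [hs.1, ht.1]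
      exact mul_le_mul_of_nonneg_left h2 ht0
    calc (∫⁻ t in Ioc s l, ENNReal.ofReal (2 * t * h t))
        ≤ ∫⁻ t in Ioc s l, ENNReal.ofReal (2 * t * ((1-t)^(n-1) * c)) := by
          refine lintegral_mono_ae ?_
          filter_upwards [ae_restrict_mem measurableSet_Ioc, ae_restrict_of_ae hne1] with t ht ht1
          exact ENNReal.ofReal_le_ofReal (hcb t ht ht1)
      _ = ENNReal.ofReal (∫ t in Ioc s l, 2 * t * ((1-t)^(n-1) * c)) := by
          rw [ofReal_integral_eq_lintegral_ofReal]
          · exact (((continuous_const.mul continuous_id).mul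
              (((continuous_const.sub continuous_id).pow _).mul continuous_const)) :
              Continuous fun t : ℝ => 2 * t * ((1-t)^(n-1) * c)).integrableOn_Ioc
          · filter_upwards [ae_restrict_mem measurableSet_Ioc] with t ht
            have : (0:ℝ) ≤ (1-t)^(n-1) := pow_nonneg (by linarith [ht.2, hl]) _
            have ht0 : (0:ℝ) ≤ t := le_trans hs.1 ht.1.le
            positivity
      _ ≤ ENNReal.ofReal (2 * K * h s) := by
          apply ENNReal.ofReal_le_ofReal
          have e : ∫ t in Ioc s l, 2 * t * ((1-t)^(n-1) * c)
              = 2 * c * ∫ t in s..l, t * (1-t)^(n-1) := by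
            rw [← intervalIntegral.integral_of_le hs.2, ← intervalIntegral.integral_const_mul]
            congr 1
            funext t
            ring
          rw [e, c2 s l hs.2]
          have hb0 : (0:ℝ) ≤ 1 - l := by linarith
          have hbl : (0:ℝ) ≤ (1-l)^n / N - (1-l)^(n+1)/(N+1) := by
            have h1 : (1-l)^(n+1) ≤ (1-l)^n := by
              calc (1-l)^(n+1) = (1-l)^n * (1-l) := pow_succ _ _
                _ ≤ (1-l)^n * 1 := by
                    exact mul_le_mul_of_nonneg_left (by linarith) (pow_nonneg hb0 _)
                _ = (1-l)^n := mul_one _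
            have h2 : (1-l)^(n+1) / (N+1) ≤ (1-l)^n / N := by
              apply div_le_div₀ (pow_nonneg hb0 _) h1 hN0
              linarith
            linarith
          have ha : (0:ℝ) < 1 - s := by linarith
          have hQs : (1-s)^n / N - (1-s)^(n+1)/(N+1) ≤ K * (1-s)^(n-1) := by
            have e1 : (1-s)^n = (1-s)^(n-1) * (1-s) := by rw [← pow_succ, hnm]
            have e2 : (1-s)^(n+1) = (1-s)^(n-1) * (1-s)^2 := by
              rw [← pow_add]
              congr 1
              omega
            rw [e1, e2]
            have key : (1-s)/N - (1-s)^2/(N+1) ≤ K := by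
              rw [hK]
              rw [div_sub_div _ _ hN0.ne' (by positivity : (N+1:ℝ) ≠ 0), div_le_div_iff₀ (by positivity) (by positivity)]
              nlinarith [sq_nonneg (2*N*(1-s) - (N+1)), hN0]
            have hp : (0:ℝ) ≤ (1-s)^(n-1) := hps.le
            calc (1-s)^(n-1) * (1-s) / N - (1-s)^(n-1) * (1-s)^2 / (N+1)
                = (1-s)^(n-1) * ((1-s)/N - (1-s)^2/(N+1)) := by ring
              _ ≤ (1-s)^(n-1) * K := mul_le_mul_of_nonneg_left key hp
              _ = K * (1-s)^(n-1) := by ring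
          have e3 : c * (1-s)^(n-1) = h s := by
            rw [hc]
            field_simp
          nlinarith [mul_le_mul_of_nonneg_left hQs (by linarith : (0:ℝ) ≤ 2 * c),
            mul_le_mul_of_nonneg_left hbl (by linarith : (0:ℝ) ≤ 2 * c)]
  -- pointwise bound on f
  have hF : ∀ t ∈ Ioc 0 l, t ≠ 1 →
      f t ^ 2 ≤ 2 * f 0 ^ 2 + 2 * t * ∫ s in Ioc 0 t, f' s ^ 2 := by
    intro t ht ht1
    have htIcc : t ∈ Icc 0 l := Ioc_subset_Icc_self ht
    have ht0 : (0:ℝ) < t := ht.1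
    have hJ0 : 0 ≤ ∫ s in Ioc 0 t, f' s ^ 2 :=
      setIntegral_nonneg measurableSet_Ioc (fun s _ => sq_nonneg _)
    have hFTCt := hFTC t htIcc
    by_cases hI : IntegrableOn f' (Ioc 0 t) volume
    · set I : ℝ := ∫ s in Ioc 0 t, f' s with hIdef
      set J : ℝ := ∫ s in Ioc 0 t, f' s ^ 2 with hJdef
      have hf2 : IntegrableOn (fun s => f' s ^ 2) (Ioc 0 t) volume := hf'int t ht ht1
      have hmeasIoc : (volume (Ioc (0:ℝ) t)).toReal = t := by
        rw [Real.volume_Ioc, ENNReal.toReal_ofReal (by linarith)]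
        ring
      have hCS : I ^ 2 ≤ t * J := by
        set cc : ℝ := I / t with hcc
        have hint_c : IntegrableOn (fun _ : ℝ => cc ^ 2) (Ioc 0 t) volume :=
          integrableOn_const (by rw [Real.volume_Ioc]; exact ENNReal.ofReal_ne_top)
        have hIc : IntegrableOn (fun s => 2 * cc * f' s) (Ioc 0 t) volume := hI.const_mul _
        have hnn : 0 ≤ ∫ s in Ioc 0 t, (f' s - cc) ^ 2 :=
          setIntegral_nonneg measurableSet_Ioc fun s _ => sq_nonneg _
        have hexp : ∫ s in Ioc 0 t, (f' s - cc) ^ 2 = J - 2 * cc * I + cc ^ 2 * t := by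
          have e : (fun s => (f' s - cc) ^ 2)
              = fun s => (f' s ^ 2 - 2 * cc * f' s) + cc ^ 2 := by
            funext s; ring
          have hsub : IntegrableOn (fun s => f' s ^ 2 - 2 * cc * f' s) (Ioc 0 t) volume :=
            hf2.sub hIc
          rw [e, integral_add hsub hint_c, integral_sub hf2 hIc,
            integral_const_mul, setIntegral_const, smul_eq_mul, measureReal_def, hmeasIoc]
          ring
        rw [hexp, hcc] at hnn
        have e2 : t * (J - 2 * (I/t) * I + (I/t)^2 * t) = t * J - I ^ 2 := by
          field_simp
          ring
        have h3 := mul_le_mul_of_nonneg_left hnn ht0.le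
        rw [mul_zero, e2] at h3
        linarith
      have hfteq : f t = f 0 + I := by
        rw [intervalIntegral.integral_of_le ht0.le] at hFTCt
        rw [hIdef]
        linarith
      rw [hfteq]
      nlinarith [sq_nonneg (f 0 - I), hCS]
    · have hni : ¬ IntervalIntegrable f' volume 0 t := by
        rw [intervalIntegrable_iff_integrableOn_Ioc_of_le ht0.le]
        exact hI
      rw [intervalIntegral.integral_undef hni] at hFTCt
      have hfe : f t = f 0 := by linarith
      rw [hfe]
      nlinarith [sq_nonneg (f 0)]
  -- main chain
  have hgnn : ∀ᵐ t ∂μ, 0 ≤ g t := by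
    filter_upwards [haemem] with t ht
    exact mul_nonneg (sq_nonneg _) (hpos t (Ioc_subset_Icc_self ht.1)).le
  have hfnn : ∀ᵐ t ∂μ, 0 ≤ f t ^ 2 * h t := by
    filter_upwards [haemem] with t ht
    exact mul_nonneg (sq_nonneg _) (hpos t (Ioc_subset_Icc_self ht.1)).le
  have hB2 : (∫⁻ t, ENNReal.ofReal (g t) ∂μ) = ENNReal.ofReal (∫ t in Ioc 0 l, g t) :=
    (ofReal_integral_eq_lintegral_ofReal hgint hgnn).symm
  have hB1 : (∫⁻ t, ENNReal.ofReal (f t ^ 2 * h t) ∂μ)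
      = ENNReal.ofReal (∫ t in Ioc 0 l, f t ^ 2 * h t) :=
    (ofReal_integral_eq_lintegral_ofReal hfint hfnn).symm
  set Φ : ℝ → ENNReal := fun t => ∫⁻ s in Ioc 0 t, ENNReal.ofReal (f' s ^ 2) with hΦ
  -- step 1: pointwise bound
  have step1 : (∫⁻ t, ENNReal.ofReal (f t ^ 2 * h t) ∂μ) ≤
      ∫⁻ t, (ENNReal.ofReal (2 * f 0 ^ 2 * h t) + ENNReal.ofReal (2 * t * h t) * Φ t) ∂μ := by
    refine lintegral_mono_ae ?_
    filter_upwards [haemem] with t htm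
    obtain ⟨ht, ht1⟩ := htm
    have htIcc : t ∈ Icc 0 l := Ioc_subset_Icc_self ht
    have hht : 0 < h t := hpos t htIcc
    have hFt := hF t ht ht1
    have hfi := hf'int t ht ht1
    have hFtnn : 0 ≤ ∫ s in Ioc 0 t, f' s ^ 2 :=
      setIntegral_nonneg measurableSet_Ioc (fun s _ => sq_nonneg _)
    have e1 : ENNReal.ofReal (∫ s in Ioc 0 t, f' s ^ 2) = Φ t :=
      ofReal_integral_eq_lintegral_ofReal hfi (Filter.Eventually.of_forall fun s => sq_nonneg _)
    have h2t : (0:ℝ) ≤ 2 * t * h t :=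
      mul_nonneg (by linarith [ht.1] : (0:ℝ) ≤ 2 * t) hht.le
    calc ENNReal.ofReal (f t ^ 2 * h t)
        ≤ ENNReal.ofReal ((2 * f 0 ^ 2 + 2 * t * ∫ s in Ioc 0 t, f' s ^ 2) * h t) :=
          ENNReal.ofReal_le_ofReal (mul_le_mul_of_nonneg_right hFt hht.le)
      _ = ENNReal.ofReal (2 * f 0 ^ 2 * h t)
          + ENNReal.ofReal ((2 * t * h t) * ∫ s in Ioc 0 t, f' s ^ 2) := by
          rw [← ENNReal.ofReal_add (mul_nonneg (by positivity) hht.le) (mul_nonneg h2t hFtnn)]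
          congr 1
          ring
      _ = ENNReal.ofReal (2 * f 0 ^ 2 * h t) + ENNReal.ofReal (2 * t * h t) * Φ t := by
          rw [ENNReal.ofReal_mul h2t, e1]
  -- step 2: split the sum
  have hmeasA : AEMeasurable (fun t => ENNReal.ofReal (2 * f 0 ^ 2 * h t)) μ :=
    (hhm.const_mul _).ennreal_ofReal
  have step2 : (∫⁻ t, (ENNReal.ofReal (2 * f 0 ^ 2 * h t) + ENNReal.ofReal (2 * t * h t) * Φ t) ∂μ)
      = (∫⁻ t, ENNReal.ofReal (2 * f 0 ^ 2 * h t) ∂μ)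
        + ∫⁻ t, ENNReal.ofReal (2 * t * h t) * Φ t ∂μ :=
    lintegral_add_left' hmeasA _
  -- term 1
  have term1 : (∫⁻ t, ENNReal.ofReal (2 * f 0 ^ 2 * h t) ∂μ)
      ≤ ENNReal.ofReal (2 / N * (f 0 ^ 2 * h 0)) := by
    calc (∫⁻ t, ENNReal.ofReal (2 * f 0 ^ 2 * h t) ∂μ)
        ≤ ∫⁻ t, ENNReal.ofReal ((2 * f 0 ^ 2 * h 0) * (1-t)^(n-1)) ∂μ := by
          refine lintegral_mono_ae ?_
          filter_upwards [haemem] with t htm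
          obtain ⟨ht, ht1⟩ := htm
          have hb := mul_le_mul_of_nonneg_left (hub t (Ioc_subset_Icc_self ht) ht1)
            (show (0:ℝ) ≤ 2 * f 0 ^ 2 by positivity)
          exact ENNReal.ofReal_le_ofReal (by nlinarith [hb])
      _ = ENNReal.ofReal (∫ t in Ioc 0 l, (2 * f 0 ^ 2 * h 0) * (1-t)^(n-1)) := by
          rw [ofReal_integral_eq_lintegral_ofReal]
          · exact ((continuous_const.mul
              ((continuous_const.sub continuous_id).pow _)).integrableOn_Ioc)
          · filter_upwards [ae_restrict_mem measurableSet_Ioc] with t ht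
            have h1 : (0:ℝ) ≤ (1-t)^(n-1) := pow_nonneg (by linarith [ht.2, hl]) _
            exact mul_nonneg (mul_nonneg (by positivity) hh0.le) h1
      _ ≤ ENNReal.ofReal (2 / N * (f 0 ^ 2 * h 0)) := by
          apply ENNReal.ofReal_le_ofReal
          rw [← intervalIntegral.integral_of_le hl0, intervalIntegral.integral_const_mul,
            c1 0 l hl0]
          have hp0 : (0:ℝ) ≤ (1-l)^n := pow_nonneg (by linarith) _
          have e0 : ((1:ℝ)-0)^n = 1 := by norm_num
          rw [e0]
          have hfh : (0:ℝ) ≤ 2 * f 0 ^ 2 * h 0 := mul_nonneg (by positivity) hh0.le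
          have h5 : (1/N - (1-l)^n/N) ≤ 1/N := by
            apply sub_le_self
            positivity
          calc 2 * f 0 ^ 2 * h 0 * (1/N - (1-l)^n/N) ≤ 2 * f 0 ^ 2 * h 0 * (1/N) :=
                mul_le_mul_of_nonneg_left h5 hfh
            _ = 2 / N * (f 0 ^ 2 * h 0) := by ring
  -- term 2 (Fubini)
  have term2 : (∫⁻ t, ENNReal.ofReal (2 * t * h t) * Φ t ∂μ)
      ≤ ENNReal.ofReal (2 * K) * ∫⁻ s, ENNReal.ofReal (g s) ∂μ := by
    set W : ℝ × ℝ → ENNReal := fun p =>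
      {q : ℝ × ℝ | q.2 ≤ q.1}.indicator
        (fun q => ENNReal.ofReal (2 * q.1 * h q.1) * ENNReal.ofReal (f' q.2 ^ 2)) p with hW
    have hWm : AEMeasurable W (μ.prod μ) := by
      refine AEMeasurable.indicator ?_ (measurableSet_le measurable_snd measurable_fst)
      exact (((aemeasurable_id.const_mul 2).mul hhm).ennreal_ofReal.comp_fst).mul
        (hf'sq.ennreal_ofReal.comp_snd)
    have e1 : ∀ t ∈ Ioc 0 l, ENNReal.ofReal (2 * t * h t) * Φ t = ∫⁻ s, W (t, s) ∂μ := by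
      intro t ht
      have hset : Iic t ∩ Ioc 0 l = Ioc 0 t := by
        ext x
        simp only [mem_inter_iff, mem_Iic, mem_Ioc]
        exact ⟨fun ⟨a, b, _⟩ => ⟨b, a⟩, fun ⟨b, a⟩ => ⟨a, b, a.trans ht.2⟩⟩
      have eΦ : Φ t = ∫⁻ s, (Iic t).indicator (fun s => ENNReal.ofReal (f' s ^ 2)) s ∂μ := by
        simp only [hΦ]
        rw [hμ, lintegral_indicator measurableSet_Iic,
          Measure.restrict_restrict measurableSet_Iic, hset]
      rw [eΦ, ← lintegral_const_mul' _ _ ENNReal.ofReal_ne_top]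
      congr 1
      funext s
      by_cases hst : s ≤ t
      · simp [hW, Set.indicator_apply, hst]
      · simp [hW, Set.indicator_apply, hst]
    have e2 : ∀ s ∈ Ioc 0 l, s ≠ 1 → (∫⁻ t, W (t, s) ∂μ)
        ≤ ENNReal.ofReal (2 * K) * ENNReal.ofReal (g s) := by
      intro s hs hs1
      have hsIcc : s ∈ Icc 0 l := Ioc_subset_Icc_self hs
      have hhs : 0 < h s := hpos s hsIcc
      have eW : (fun t => W (t, s))
          = fun t => (Ici s).indicator (fun t => ENNReal.ofReal (2 * t * h t)) t
            * ENNReal.ofReal (f' s ^ 2) := by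
        funext t
        by_cases hst : s ≤ t
        · simp [hW, Set.indicator_apply, hst, mem_Ici]
        · simp [hW, Set.indicator_apply, hst, mem_Ici]
      rw [eW, lintegral_mul_const' _ _ ENNReal.ofReal_ne_top]
      have eint : (∫⁻ t, (Ici s).indicator (fun t => ENNReal.ofReal (2 * t * h t)) t ∂μ)
          = ∫⁻ t in Icc s l, ENNReal.ofReal (2 * t * h t) := by
        have hset2 : Ici s ∩ Ioc 0 l = Icc s l := by
          ext x
          simp only [mem_inter_iff, mem_Ici, mem_Ioc, mem_Icc]
          exact ⟨fun ⟨a, _, c⟩ => ⟨a, c⟩, fun ⟨a, c⟩ => ⟨a, lt_of_lt_of_le hs.1 a, c⟩⟩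
        rw [hμ, lintegral_indicator measurableSet_Ici,
          Measure.restrict_restrict measurableSet_Ici, hset2]
      have eIcc : (∫⁻ t in Icc s l, ENNReal.ofReal (2 * t * h t))
          = ∫⁻ t in Ioc s l, ENNReal.ofReal (2 * t * h t) := by
        rw [Measure.restrict_congr_set Ioc_ae_eq_Icc.symm]
      rw [eint, eIcc]
      calc (∫⁻ t in Ioc s l, ENNReal.ofReal (2 * t * h t)) * ENNReal.ofReal (f' s ^ 2)
          ≤ ENNReal.ofReal (2 * K * h s) * ENNReal.ofReal (f' s ^ 2) :=
            mul_le_mul_left (hG s hsIcc) _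
        _ = ENNReal.ofReal (2 * K) * ENNReal.ofReal (g s) := by
            rw [← ENNReal.ofReal_mul (mul_nonneg (by linarith : (0:ℝ) ≤ 2 * K) hhs.le),
              ← ENNReal.ofReal_mul (by linarith : (0:ℝ) ≤ 2 * K)]
            congr 1
            simp only [hg]
            ring
    calc (∫⁻ t, ENNReal.ofReal (2 * t * h t) * Φ t ∂μ)
        = ∫⁻ t, ∫⁻ s, W (t, s) ∂μ ∂μ := by
          refine lintegral_congr_ae ?_
          filter_upwards [haemem] with t htm
          exact e1 t htm.1
      _ = ∫⁻ s, ∫⁻ t, W (t, s) ∂μ ∂μ := by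
          exact lintegral_lintegral_swap hWm
      _ ≤ ∫⁻ s, ENNReal.ofReal (2 * K) * ENNReal.ofReal (g s) ∂μ := by
          refine lintegral_mono_ae ?_
          filter_upwards [haemem] with s hsm
          exact e2 s hsm.1 hsm.2
      _ = ENNReal.ofReal (2 * K) * ∫⁻ s, ENNReal.ofReal (g s) ∂μ :=
          lintegral_const_mul' _ _ ENNReal.ofReal_ne_top
  -- assemble
  have nn2 : 0 ≤ ∫ t in Ioc 0 l, g t :=
    setIntegral_nonneg measurableSet_Ioc
      (fun t ht => mul_nonneg (sq_nonneg _) (hpos t (Ioc_subset_Icc_self ht)).le)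
  have hKe : 2 * K = (N + 1) / (2 * N ^ 2) := by
    rw [hK]
    field_simp
    ring
  have hRHSnn : 0 ≤ 2 / N * (f 0 ^ 2 * h 0) + (N + 1) / (2 * N ^ 2) * ∫ t in Ioc 0 l, g t := by
    have h1 : (0:ℝ) ≤ 2 / N * (f 0 ^ 2 * h 0) :=
      mul_nonneg (div_nonneg (by norm_num) hN0.le) (mul_nonneg (sq_nonneg _) hh0.le)
    have h2 : (0:ℝ) ≤ (N + 1) / (2 * N ^ 2) := by positivity
    nlinarith [mul_nonneg h2 nn2]
  have main : ENNReal.ofReal (∫ t in Ioc 0 l, f t ^ 2 * h t)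
      ≤ ENNReal.ofReal (2 / N * (f 0 ^ 2 * h 0)
        + (N + 1) / (2 * N ^ 2) * ∫ t in Ioc 0 l, g t) := by
    rw [← hB1]
    refine le_trans step1 ?_
    rw [step2]
    refine le_trans (add_le_add term1 term2) ?_
    rw [hB2, ← ENNReal.ofReal_mul (by positivity : (0:ℝ) ≤ 2 * K)]
    rw [← ENNReal.ofReal_add
      (mul_nonneg (div_nonneg (by norm_num) hN0.le) (mul_nonneg (sq_nonneg _) hh0.le))
      (mul_nonneg (by linarith : (0:ℝ) ≤ 2 * K) nn2)]
    apply ENNReal.ofReal_le_ofReal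
    rw [hKe]
  rw [intervalIntegral.integral_of_le hl0, intervalIntegral.integral_of_le hl0]
  exact (ENNReal.ofReal_le_ofReal_iff hRHSnn).1 main
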